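/- Fix L > 0 and define Ω_Λ = {(λ₁,λ₂,λ₃) ∈ ℝ³ : λ₁ < 0, λ₂ < 0, λ₃ < 0, λ₁, λ₂, λ₃ pairwise distinct, and L·φ(λ₁,λ₂,λ₃)·h(λ₁,λ₂,λ₃) < 1}, and let Ω_K ⊂ ℝ³ be the image of Ω_Λ under the map (λ₁,λ₂,λ₃) ↦ (−(λ₁λ₂+λ₁λ₃+λ₂λ₃), λ₁λ₂λ₃, λ₁+λ₂+λ₃). Then Ω_K is a nonempty, open, unbounded subset of ℝ³. -/

import Mathlib

noncomputable def phi (l1 l2 l3 : ℝ) : ℝ :=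
  Real.sqrt (((l3 - l2) ^ 2 + (l3 - l1) ^ 2 + l3 ^ 2 * (l2 - l1) ^ 2) /
    ((l3 - l1) ^ 2 * (l2 - l1) ^ 2 * (l3 - l2) ^ 2))

noncomputable def hfun (l1 l2 l3 : ℝ) : ℝ :=
  Real.sqrt (3 + l1 ^ 2 + l2 ^ 2 + 1 / l3 ^ 2)

/-- The admissible eigenvalue region `Ω_Λ`. -/
def OmegaLambda (L : ℝ) : Set (ℝ × ℝ × ℝ) :=
  {p | p.1 < 0 ∧ p.2.1 < 0 ∧ p.2.2 < 0 ∧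
    p.1 ≠ p.2.1 ∧ p.1 ≠ p.2.2 ∧ p.2.1 ≠ p.2.2 ∧
    L * phi p.1 p.2.1 p.2.2 * hfun p.1 p.2.1 p.2.2 < 1}

/-- The map sending eigenvalues `(λ₁, λ₂, λ₃)` to PID gains `(k_p, k_i, k_d)`. -/
def gainMap (p : ℝ × ℝ × ℝ) : ℝ × ℝ × ℝ :=
  (-(p.1 * p.2.1 + p.1 * p.2.2 + p.2.1 * p.2.2),
    p.1 * p.2.1 * p.2.2,
    p.1 + p.2.1 + p.2.2)

/-- The admissible PID gain region `Ω_K`, image of `Ω_Λ` under the Vieta map. -/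
def OmegaK (L : ℝ) : Set (ℝ × ℝ × ℝ) := gainMap '' OmegaLambda L

/-! ### Auxiliary material -/

/-- The Jacobian of `gainMap` at `(a,b,c)` as a linear map. -/
def Jlin (a b c : ℝ) : (ℝ × ℝ × ℝ) →ₗ[ℝ] (ℝ × ℝ × ℝ) where
  toFun v := (-((b + c) * v.1 + (a + c) * v.2.1 + (a + b) * v.2.2),
    b * c * v.1 + a * c * v.2.1 + a * b * v.2.2,
    v.1 + v.2.1 + v.2.2)
  map_add' v w := by ext <;> dsimp <;> ring
  map_smul' r v := by ext <;> dsimp <;> ring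

lemma Jlin_bijective {a b c : ℝ} (hab : a ≠ b) (hac : a ≠ c) (hbc : b ≠ c) :
    Function.Bijective (Jlin a b c) := by
  have hinj : Function.Injective (Jlin a b c) := by
    rw [injective_iff_map_eq_zero]
    rintro ⟨v1, v2, v3⟩ hv
    have e1 : -((b + c) * v1 + (a + c) * v2 + (a + b) * v3) = 0 := congrArg Prod.fst hv
    have e2 : b * c * v1 + a * c * v2 + a * b * v3 = 0 :=
      congrArg Prod.fst (congrArg Prod.snd hv)
    have e3 : v1 + v2 + v3 = 0 := congrArg Prod.snd (congrArg Prod.snd hv)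
    have hab' : a - b ≠ 0 := sub_ne_zero.2 hab
    have hac' : a - c ≠ 0 := sub_ne_zero.2 hac
    have hbc' : b - c ≠ 0 := sub_ne_zero.2 hbc
    have hv1 : v1 * ((a - b) * (a - c)) = 0 := by linear_combination a ^ 2 * e3 + a * e1 + e2
    have hv2 : v2 * ((b - a) * (b - c)) = 0 := by linear_combination b ^ 2 * e3 + b * e1 + e2
    have hv3 : v3 * ((c - a) * (c - b)) = 0 := by linear_combination c ^ 2 * e3 + c * e1 + e2
    have h1 : v1 = 0 := by
      rcases mul_eq_zero.1 hv1 with h | h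
      · exact h
      · exact absurd h (mul_ne_zero hab' hac')
    have h2 : v2 = 0 := by
      rcases mul_eq_zero.1 hv2 with h | h
      · exact h
      · exact absurd h (mul_ne_zero (sub_ne_zero.2 hab.symm) hbc')
    have h3 : v3 = 0 := by
      rcases mul_eq_zero.1 hv3 with h | h
      · exact h
      · exact absurd h (mul_ne_zero (sub_ne_zero.2 hac.symm) (sub_ne_zero.2 hbc.symm))
    simp [h1, h2, h3, Prod.ext_iff]
  exact ⟨hinj, LinearMap.injective_iff_surjective.1 hinj⟩

/-- The Jacobian as a continuous linear equivalence. -/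
noncomputable def Jequiv {a b c : ℝ} (hab : a ≠ b) (hac : a ≠ c) (hbc : b ≠ c) :
    (ℝ × ℝ × ℝ) ≃L[ℝ] (ℝ × ℝ × ℝ) :=
  (LinearEquiv.ofBijective (Jlin a b c) (Jlin_bijective hab hac hbc)).toContinuousLinearEquiv

lemma hasStrictFDerivAt_gainMap {p : ℝ × ℝ × ℝ}
    (hab : p.1 ≠ p.2.1) (hac : p.1 ≠ p.2.2) (hbc : p.2.1 ≠ p.2.2) :
    HasStrictFDerivAt gainMap
      ((Jequiv hab hac hbc : (ℝ × ℝ × ℝ) ≃L[ℝ] (ℝ × ℝ × ℝ)) :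
        (ℝ × ℝ × ℝ) →L[ℝ] (ℝ × ℝ × ℝ)) p := by
  have hx : HasStrictFDerivAt (fun q : ℝ × ℝ × ℝ => q.1)
      (ContinuousLinearMap.fst ℝ ℝ (ℝ × ℝ)) p := hasStrictFDerivAt_fst
  have hy : HasStrictFDerivAt (fun q : ℝ × ℝ × ℝ => q.2.1)
      ((ContinuousLinearMap.fst ℝ ℝ ℝ).comp (ContinuousLinearMap.snd ℝ ℝ (ℝ × ℝ))) p :=
    hasStrictFDerivAt_fst.comp p hasStrictFDerivAt_snd
  have hz : HasStrictFDerivAt (fun q : ℝ × ℝ × ℝ => q.2.2)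
      ((ContinuousLinearMap.snd ℝ ℝ ℝ).comp (ContinuousLinearMap.snd ℝ ℝ (ℝ × ℝ))) p :=
    hasStrictFDerivAt_snd.comp p hasStrictFDerivAt_snd
  have hD := ((((hx.mul hy).add (hx.mul hz)).add (hy.mul hz)).neg).prodMk
    (((hx.mul hy).mul hz).prodMk ((hx.add hy).add hz))
  refine hD.congr_fderiv ?_
  symm
  apply ContinuousLinearMap.ext
  intro v
  show Jlin p.1 p.2.1 p.2.2 v = _
  simp [Jlin, ContinuousLinearMap.prod_apply, ContinuousLinearMap.comp_apply]
  exact ⟨by ring, by ring⟩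

lemma mem_OmegaLambda (L t : ℝ) (hL : 0 < L) (ht : 12 * L + 4 ≤ t) :
    ((-1, -2, -t) : ℝ × ℝ × ℝ) ∈ OmegaLambda L := by
  have ht4 : (4 : ℝ) ≤ t := by nlinarith
  have h42 : (0 : ℝ) < t - 2 := by linarith
  have hD : (0 : ℝ) < ((-t : ℝ) - -1) ^ 2 * ((-2 : ℝ) - -1) ^ 2 * ((-t : ℝ) - -2) ^ 2 := by
    have h := mul_pos (show (0:ℝ) < t - 1 by linarith) h42
    nlinarith
  have hphi : phi (-1) (-2) (-t) ≤ 4 / (t - 2) := by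
    unfold phi
    have key : (((-t : ℝ) - -2) ^ 2 + ((-t : ℝ) - -1) ^ 2 + (-t : ℝ) ^ 2 * ((-2 : ℝ) - -1) ^ 2) /
        (((-t : ℝ) - -1) ^ 2 * ((-2 : ℝ) - -1) ^ 2 * ((-t : ℝ) - -2) ^ 2) ≤ (4 / (t - 2)) ^ 2 := by
      rw [div_pow, div_le_div_iff₀ hD (by positivity)]
      nlinarith [sq_nonneg ((t - 2) * (t - 1)), sq_nonneg (t - 2), sq_nonneg (t - 1)]
    calc Real.sqrt _ ≤ Real.sqrt ((4 / (t - 2)) ^ 2) := Real.sqrt_le_sqrt key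
      _ = 4 / (t - 2) := Real.sqrt_sq (by positivity)
  have hh : hfun (-1) (-2) (-t) ≤ 3 := by
    unfold hfun
    have h1 : ((t : ℝ) ^ 2)⁻¹ ≤ 1 := by
      rw [inv_le_one_iff₀]; right; nlinarith
    calc Real.sqrt _ ≤ Real.sqrt (3 ^ 2) := Real.sqrt_le_sqrt (by norm_num; linarith)
      _ = 3 := Real.sqrt_sq (by norm_num)
  refine ⟨by norm_num, by norm_num, show -t < 0 by linarith, by norm_num,
    show (-1 : ℝ) ≠ -t from ne_of_gt (by linarith),
    show (-2 : ℝ) ≠ -t from ne_of_gt (by linarith), ?_⟩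
  have hphi0 : 0 ≤ phi (-1) (-2) (-t) := Real.sqrt_nonneg _
  have hh0 : 0 ≤ hfun (-1) (-2) (-t) := Real.sqrt_nonneg _
  have hmul : phi (-1) (-2) (-t) * hfun (-1) (-2) (-t) ≤ (4 / (t - 2)) * 3 :=
    mul_le_mul hphi hh hh0 (by positivity)
  have : L * (phi (-1) (-2) (-t) * hfun (-1) (-2) (-t)) ≤ L * ((4 / (t - 2)) * 3) :=
    mul_le_mul_of_nonneg_left hmul hL.le
  have hlt : L * ((4 / (t - 2)) * 3) < 1 := by
    rw [show L * (4 / (t - 2) * 3) = (12 * L) / (t - 2) by ring, div_lt_one h42]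
    linarith
  calc L * phi (-1) (-2) (-t) * hfun (-1) (-2) (-t)
      = L * (phi (-1) (-2) (-t) * hfun (-1) (-2) (-t)) := by ring
    _ ≤ L * ((4 / (t - 2)) * 3) := this
    _ < 1 := hlt

lemma isOpen_OmegaLambda (L : ℝ) : IsOpen (OmegaLambda L) := by
  have hU : IsOpen {p : ℝ × ℝ × ℝ | p.1 < 0 ∧ p.2.1 < 0 ∧ p.2.2 < 0 ∧
      p.1 ≠ p.2.1 ∧ p.1 ≠ p.2.2 ∧ p.2.1 ≠ p.2.2} := by
    refine IsOpen.inter (isOpen_lt continuous_fst continuous_const) ?_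
    refine IsOpen.inter (isOpen_lt (continuous_fst.comp continuous_snd) continuous_const) ?_
    refine IsOpen.inter (isOpen_lt (continuous_snd.comp continuous_snd) continuous_const) ?_
    refine IsOpen.inter (isOpen_ne_fun continuous_fst (continuous_fst.comp continuous_snd)) ?_
    exact IsOpen.inter (isOpen_ne_fun continuous_fst (continuous_snd.comp continuous_snd))
      (isOpen_ne_fun (continuous_fst.comp continuous_snd) (continuous_snd.comp continuous_snd))
  have hcont : ContinuousOn (fun p : ℝ × ℝ × ℝ => L * phi p.1 p.2.1 p.2.2 * hfun p.1 p.2.1 p.2.2)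
      {p : ℝ × ℝ × ℝ | p.1 < 0 ∧ p.2.1 < 0 ∧ p.2.2 < 0 ∧
        p.1 ≠ p.2.1 ∧ p.1 ≠ p.2.2 ∧ p.2.1 ≠ p.2.2} := by
    have hphi : ContinuousOn (fun p : ℝ × ℝ × ℝ => phi p.1 p.2.1 p.2.2)
        {p : ℝ × ℝ × ℝ | p.1 < 0 ∧ p.2.1 < 0 ∧ p.2.2 < 0 ∧
          p.1 ≠ p.2.1 ∧ p.1 ≠ p.2.2 ∧ p.2.1 ≠ p.2.2} := by
      apply Real.continuous_sqrt.comp_continuousOn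
      apply ContinuousOn.div
      · fun_prop
      · fun_prop
      · rintro ⟨a, b, c⟩ ⟨_, _, _, hab, hac, hbc⟩
        have : c - a ≠ 0 := sub_ne_zero.2 (Ne.symm hac)
        have : b - a ≠ 0 := sub_ne_zero.2 (Ne.symm hab)
        have : c - b ≠ 0 := sub_ne_zero.2 (Ne.symm hbc)
        positivity
    have hhfun : ContinuousOn (fun p : ℝ × ℝ × ℝ => hfun p.1 p.2.1 p.2.2)
        {p : ℝ × ℝ × ℝ | p.1 < 0 ∧ p.2.1 < 0 ∧ p.2.2 < 0 ∧
          p.1 ≠ p.2.1 ∧ p.1 ≠ p.2.2 ∧ p.2.1 ≠ p.2.2} := by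
      apply Real.continuous_sqrt.comp_continuousOn
      apply ContinuousOn.add
      · fun_prop
      · apply ContinuousOn.div
        · fun_prop
        · fun_prop
        · rintro ⟨a, b, c⟩ ⟨_, _, hc, _, _, _⟩
          have : c ≠ 0 := ne_of_lt hc
          positivity
    exact (continuousOn_const.mul hphi).mul hhfun
  have heq : OmegaLambda L = {p : ℝ × ℝ × ℝ | p.1 < 0 ∧ p.2.1 < 0 ∧ p.2.2 < 0 ∧
      p.1 ≠ p.2.1 ∧ p.1 ≠ p.2.2 ∧ p.2.1 ≠ p.2.2} ∩
      (fun p : ℝ × ℝ × ℝ => L * phi p.1 p.2.1 p.2.2 * hfun p.1 p.2.1 p.2.2) ⁻¹' Set.Iio 1 := by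
    ext p
    simp only [OmegaLambda, Set.mem_setOf_eq, Set.mem_inter_iff, Set.mem_preimage, Set.mem_Iio]
    tauto
  rw [heq]
  exact hcont.isOpen_inter_preimage hU isOpen_Iio

theorem OmegaK_nonempty_open_unbounded (L : ℝ) (hL : 0 < L) :
    (OmegaK L).Nonempty ∧ IsOpen (OmegaK L) ∧ ¬ Bornology.IsBounded (OmegaK L) := by
  refine ⟨?_, ?_, ?_⟩
  · exact ⟨gainMap (-1, -2, -(12 * L + 4)),
      Set.mem_image_of_mem _ (mem_OmegaLambda L (12 * L + 4) hL le_rfl)⟩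
  · rw [isOpen_iff_mem_nhds]
    rintro y ⟨p, hp, rfl⟩
    obtain ⟨_, _, _, hab, hac, hbc, _⟩ := id hp
    have hmap := (hasStrictFDerivAt_gainMap hab hac hbc).map_nhds_eq_of_equiv
    rw [← hmap]
    exact Filter.image_mem_map ((isOpen_OmegaLambda L).mem_nhds hp)
  · intro hb
    obtain ⟨C, hC⟩ := isBounded_iff_forall_norm_le.1 hb
    set t : ℝ := max (12 * L + 4) (C + 3) with htdef
    have ht1 : 12 * L + 4 ≤ t := le_max_left _ _
    have ht2 : C + 3 ≤ t := le_max_right _ _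
    have hq : gainMap (-1, -2, -t) ∈ OmegaK L :=
      Set.mem_image_of_mem _ (mem_OmegaLambda L t hL ht1)
    have hnorm := hC _ hq
    have h1 : ‖(gainMap (-1, -2, -t)).1‖ ≤ ‖gainMap (-1, -2, -t)‖ := norm_fst_le _
    have hfst : (gainMap (-1, -2, -t)).1 = -(2 + 3 * t) := by
      simp [gainMap]; ring
    rw [hfst, Real.norm_eq_abs, abs_neg, abs_of_nonneg (by nlinarith)] at h1
    have hC0 : 0 ≤ C := le_trans (norm_nonneg _) hnorm
    linarith
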